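/- For all integers d ≥ 2, k > 1, and ℓ ≥ k+1, we have (1 - 1/k)^d + 1/ℓ^d < (1 - 1/ℓ)^d. -/

import Mathlib

theorem stmt_0 (d k ℓ : ℕ) (hd : 2 ≤ d) (hk : 2 ≤ k) (hℓ : k + 1 ≤ ℓ) :
    (1 - 1 / (k : ℝ)) ^ d + 1 / (ℓ : ℝ) ^ d < (1 - 1 / (ℓ : ℝ)) ^ d := by
  have hk1 : (2:ℝ) ≤ (k:ℝ) := by exact_mod_cast hk
  have hl1 : (k:ℝ) + 1 ≤ (ℓ:ℝ) := by exact_mod_cast hℓ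
  have hk0 : (0:ℝ) < k := by linarith
  have hl0 : (0:ℝ) < ℓ := by linarith
  have ha : (1/(k:ℝ)) * k = 1 := by field_simp
  have hb : (1/(ℓ:ℝ)) * ℓ = 1 := by field_simp
  have hbk : 1/(ℓ:ℝ) < 1/(k:ℝ) := by
    apply one_div_lt_one_div_of_lt hk0; linarith
  have hbpos : 0 < 1/(ℓ:ℝ) := by positivity
  have hapos : 0 < 1/(k:ℝ) := by positivity
  have halt : 1/(k:ℝ) ≤ 1/2 := by
    apply one_div_le_one_div_of_le <;> linarith
  have hblt : 1/(ℓ:ℝ) ≤ 1/3 := by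
    apply one_div_le_one_div_of_le <;> linarith
  induction d, hd using Nat.le_induction with
  | base =>
    have hbl : 1/(ℓ:ℝ) ≤ 1/((k:ℝ)+1) := by
      apply one_div_le_one_div_of_le <;> linarith
    have : 1/(ℓ:ℝ)^2 = (1/(ℓ:ℝ))^2 := by rw [one_div, one_div, inv_pow]
    rw [this]
    nlinarith [sq_nonneg (1/(k:ℝ) - 1/(ℓ:ℝ)), mul_pos hk0 (show (0:ℝ) < k+1 by linarith)]
  | succ d hd ih =>
    have hpk : (0:ℝ) ≤ (1 - 1/(k:ℝ))^d := pow_nonneg (by linarith) d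
    have hpl : (0:ℝ) < (1 - 1/(ℓ:ℝ))^d := by
      apply pow_pos; linarith
    have hpl2 : (0:ℝ) < 1/(ℓ:ℝ)^d := by positivity
    have key : (1 - 1/(k:ℝ))^(d+1) + 1/(ℓ:ℝ)^(d+1)
        ≤ (1 - 1/(ℓ:ℝ)) * ((1 - 1/(k:ℝ))^d + 1/(ℓ:ℝ)^d) := by
      have e1 : (1 - 1/(k:ℝ))^(d+1) = (1 - 1/(k:ℝ)) * (1 - 1/(k:ℝ))^d := by ring
      have e2 : 1/(ℓ:ℝ)^(d+1) = (1/(ℓ:ℝ)) * (1/(ℓ:ℝ)^d) := by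
        rw [pow_succ]; field_simp
      rw [e1, e2]
      have h1 : (1 - 1/(k:ℝ)) * (1 - 1/(k:ℝ))^d ≤ (1 - 1/(ℓ:ℝ)) * (1 - 1/(k:ℝ))^d := by
        apply mul_le_mul_of_nonneg_right (by linarith) hpk
      have h2 : (1/(ℓ:ℝ)) * (1/(ℓ:ℝ)^d) ≤ (1 - 1/(ℓ:ℝ)) * (1/(ℓ:ℝ)^d) := by
        apply mul_le_mul_of_nonneg_right (by linarith) (le_of_lt hpl2)
      linarith [h1, h2]
    calc (1 - 1/(k:ℝ))^(d+1) + 1/(ℓ:ℝ)^(d+1)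
        ≤ (1 - 1/(ℓ:ℝ)) * ((1 - 1/(k:ℝ))^d + 1/(ℓ:ℝ)^d) := key
      _ < (1 - 1/(ℓ:ℝ)) * (1 - 1/(ℓ:ℝ))^d := by
          apply mul_lt_mul_of_pos_left ih (by linarith)
      _ = (1 - 1/(ℓ:ℝ))^(d+1) := by ring
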